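/- On the Lie algebra r_{4,1} with structure equations de^1 = e^1∧e^4, de^2 = e^2∧e^4 + e^3∧e^4, de^3 = e^3∧e^4, de^4 = 0, every 2-form Ω satisfying dΩ = θ∧Ω for the closed 1-form θ = -2e^4 has zero coefficient on e^1∧e^2; hence for the complex structure J with Je^1=e^2, Je^3=-e^4, Ω can never be positive, so r_{4,1} admits no lcK structure with this complex structure. -/

import Mathlib

/-- On `r_{4,1}` (brackets `[e1,e4]=-e1`, `[e2,e4]=-e2`, `[e3,e4]=-e2-e3`), every
2-form `Ω` with `dΩ = θ ∧ Ω` for `θ = -2e⁴` has zero coefficient on `e¹∧e²`;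
hence for the complex structure `J` with `Je1=e2, Je3=-e4`, `Ω` can never be positive,
so `r_{4,1}` admits no lcK structure with this complex structure. -/
theorem stmt6 (L : Type*) [LieRing L] [LieAlgebra ℝ L]
    (b : Module.Basis (Fin 4) ℝ L)
    (h01 : ⁅b 0, b 1⁆ = 0) (h02 : ⁅b 0, b 2⁆ = 0) (h03 : ⁅b 0, b 3⁆ = -(b 0))
    (h12 : ⁅b 1, b 2⁆ = 0) (h13 : ⁅b 1, b 3⁆ = -(b 1))
    (h23 : ⁅b 2, b 3⁆ = -(b 1) - b 2)
    (J : L →ₗ[ℝ] L)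
    (hJ0 : J (b 0) = b 1) (hJ1 : J (b 1) = -(b 0))
    (hJ2 : J (b 2) = -(b 3)) (hJ3 : J (b 3) = b 2)
    (θ : L →ₗ[ℝ] ℝ)
    (hθ0 : θ (b 0) = 0) (hθ1 : θ (b 1) = 0) (hθ2 : θ (b 2) = 0) (hθ3 : θ (b 3) = -2) :
    ∀ Ω : L →ₗ[ℝ] L →ₗ[ℝ] ℝ, (∀ x y : L, Ω x y = - Ω y x) →
      (∀ x y z : L, -Ω ⁅x, y⁆ z + Ω ⁅x, z⁆ y - Ω ⁅y, z⁆ x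
          = θ x * Ω y z - θ y * Ω x z + θ z * Ω x y) →
      Ω (b 0) (b 1) = 0 ∧ ¬ (∀ x : L, x ≠ 0 → 0 < Ω x (J x)) := by
  intro Ω hskew hlck
  have key := hlck (b 0) (b 2) (b 3)
  rw [h02, h03, h23] at key
  simp only [map_neg, map_sub, map_zero, LinearMap.neg_apply, LinearMap.sub_apply,
    LinearMap.zero_apply, hθ0, hθ2, hθ3] at key
  have hs1 := hskew (b 1) (b 0)
  have hs2 := hskew (b 2) (b 0)
  have h0 : Ω (b 0) (b 1) = 0 := by linarith
  refine ⟨h0, fun hpos => ?_⟩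
  have := hpos (b 0) (b.ne_zero 0)
  rw [hJ0, h0] at this
  exact lt_irrefl 0 this
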